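/- arXiv:2302.04086 — 5 statements merged into one kernel-verified Lean document; each statement's English description precedes it below -/
import Mathlib

section
/- For every n ≥ 1 and every unit pure quaternion μ, the discrete quaternion Fourier transform matrix F_μ is unitary: F_μᴴ F_μ = F_μ F_μᴴ = Iₙ. -/
open Quaternion Matrix

/-- `ω = exp(−2πμ/n)`, the quaternion exponential of `(−2π/n)·μ`. -/
noncomputable def qomega (n : ℕ) (μ : ℍ[ℝ]) : ℍ[ℝ] :=
  NormedSpace.exp ((-(2 * Real.pi) / n : ℝ) • μ)

/-- The `n×n` discrete quaternion Fourier transform matrix,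
`(F_μ)_{uv} = (1/√n)·ω^{uv}` for `u, v = 0, …, n−1`. -/
noncomputable def qdft (n : ℕ) (μ : ℍ[ℝ]) : Matrix (Fin n) (Fin n) ℍ[ℝ] :=
  Matrix.of fun u v => ((Real.sqrt n)⁻¹ : ℝ) • (qomega n μ) ^ ((u : ℕ) * (v : ℕ))

/-- for every `n ≥ 1` and unit pure quaternion `μ`, the discrete quaternion
Fourier matrix is unitary: `F_μᴴ F_μ = F_μ F_μᴴ = Iₙ`. -/
theorem qdft_unitary (n : ℕ) (hn : 1 ≤ n) (μ : ℍ[ℝ]) (hpure : μ.re = 0) (hunit : ‖μ‖ = 1) :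
    (qdft n μ)ᴴ * qdft n μ = 1 ∧ qdft n μ * (qdft n μ)ᴴ = 1 := by
  have hn0 : (n : ℝ) ≠ 0 := Nat.cast_ne_zero.2 (by omega)
  -- μ squares to -1
  have hμstar : star μ = -μ := Quaternion.star_eq_neg.2 hpure
  have hμ2 : μ * μ = -1 := by
    have h2 : Quaternion.normSq μ = 1 := by
      rw [Quaternion.normSq_eq_norm_mul_self, hunit, one_mul]
    have h := Quaternion.self_mul_star (a := μ)
    rw [hμstar, h2] at h
    have h3 : μ * μ = -(μ * -μ) := by rw [mul_neg, neg_neg]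
    rw [h3, h]; simp
  set f : ℂ →ₐ[ℝ] ℍ[ℝ] := Complex.liftAux μ hμ2 with hf
  have hfc : Continuous f := f.toLinearMap.continuous_of_finiteDimensional
  set ζ : ℂ := Complex.exp (((-(2 * Real.pi) / n : ℝ) : ℂ) * Complex.I) with hζdef
  have hζ0 : ζ ≠ 0 := Complex.exp_ne_zero _
  have hexpℝ : ∀ z : ℂ, NormedSpace.exp z = Complex.exp z := fun z => by
    rw [Complex.exp_eq_exp_ℂ]
  have hω : qomega n μ = f ζ := by
    have h1 : ζ = Complex.exp ((-(2 * Real.pi) / n : ℝ) • Complex.I) := by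
      rw [hζdef, Complex.real_smul]
    rw [qomega, h1, ← hexpℝ, NormedSpace.map_exp f hfc, _root_.map_smul,
      Complex.liftAux_apply_I]
  have hstar : ∀ z : ℂ, star (f z) = f ((starRingEnd ℂ) z) := fun z => by
    rw [hf, Complex.liftAux_apply, Complex.liftAux_apply, star_add, Quaternion.star_smul,
      hμstar, Complex.conj_re, Complex.conj_im, smul_neg, ← neg_smul]
    congr 1
    simp [Quaternion.algebraMap_def]
  have hconjζ : (starRingEnd ℂ) ζ = ζ⁻¹ := by
    rw [hζdef, ← Complex.exp_conj, ← Complex.exp_neg]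
    congr 1
    simp only [_root_.map_mul, Complex.conj_ofReal, Complex.conj_I]
    ring
  have hpow : ∀ k : ℕ, qomega n μ ^ k = f (ζ ^ k) := fun k => by rw [hω, map_pow]
  have hstarpow : ∀ k : ℕ, star (qomega n μ ^ k) = f (ζ⁻¹ ^ k) := fun k => by
    rw [hpow, hstar, map_pow, hconjζ]
  have hprim : IsPrimitiveRoot ζ n := by
    have h := Complex.isPrimitiveRoot_exp n (by omega)
    have h1 : ζ = (Complex.exp (2 * Real.pi * Complex.I / n))⁻¹ := by
      rw [hζdef, ← Complex.exp_neg]; congr 1; push_cast; ring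
    rw [h1]; exact h.inv
  -- key geometric sum
  have key : ∀ v w : Fin n, (∑ u : Fin n, (ζ ^ ((v : ℤ) - (w : ℤ))) ^ (u : ℕ)) =
      if v = w then (n : ℂ) else 0 := by
    intro v w
    by_cases h : v = w
    · subst h; simp
    · rw [if_neg h]
      set x := ζ ^ ((v : ℤ) - (w : ℤ)) with hx
      have hd : ((v : ℤ) - (w : ℤ)) ≠ 0 := by
        have := Fin.val_ne_of_ne h
        omega
      have hx1 : x ≠ 1 := by
        rw [hx, Ne, hprim.zpow_eq_one_iff_dvd]
        intro hdvd
        have habs : |(v : ℤ) - (w : ℤ)| < (n : ℤ) := by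
          have hv := v.isLt; have hw := w.isLt
          rw [abs_sub_lt_iff]; omega
        have hle : (n : ℤ) ≤ |(v : ℤ) - (w : ℤ)| :=
          Int.le_of_dvd (abs_pos.2 hd) ((dvd_abs _ _).2 hdvd)
        omega
      have hxn : x ^ n = 1 := by
        rw [hx, ← zpow_natCast, ← _root_.zpow_mul, mul_comm, _root_.zpow_mul, zpow_natCast,
          hprim.pow_eq_one, _root_.one_zpow]
      rw [Fin.sum_univ_eq_sum_range (fun i => x ^ i) n, geom_sum_eq hx1, hxn]
      simp
  have hsqrt : (Real.sqrt n)⁻¹ * (Real.sqrt n)⁻¹ = (n : ℝ)⁻¹ := by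
    rw [← mul_inv, Real.mul_self_sqrt (Nat.cast_nonneg n)]
  have hterm : ∀ a b : ℕ, ζ⁻¹ ^ a * ζ ^ b = ζ ^ ((b : ℤ) - (a : ℤ)) := fun a b => by
    rw [inv_pow, ← zpow_natCast ζ a, ← _root_.zpow_neg, ← zpow_natCast ζ b, ← zpow_add₀ hζ0]
    congr 1; ring
  have hterm2 : ∀ u v w : ℕ, ζ ^ (((u * w : ℕ) : ℤ) - ((u * v : ℕ) : ℤ)) =
      (ζ ^ ((w : ℤ) - (v : ℤ))) ^ u := fun u v w => by
    rw [← zpow_natCast (ζ ^ ((w : ℤ) - (v : ℤ))) u, ← _root_.zpow_mul]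
    congr 1; push_cast; ring
  have hdiag : ∀ v w : Fin n, (n : ℝ)⁻¹ • f (if v = w then (n : ℂ) else 0) =
      (1 : Matrix (Fin n) (Fin n) ℍ[ℝ]) v w := by
    intro v w
    rw [Matrix.one_apply]
    by_cases h : v = w
    · rw [if_pos h, if_pos h, map_natCast]
      have : ((n : ℍ[ℝ])) = (((n : ℝ)) : ℍ[ℝ]) := by push_cast; rfl
      rw [this, Quaternion.smul_coe, inv_mul_cancel₀ hn0, Quaternion.coe_one]
    · rw [if_neg h, if_neg h, map_zero, smul_zero]
  constructor
  · refine Matrix.ext fun v w => ?_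
    rw [Matrix.mul_apply]
    have hsummand : ∀ u : Fin n,
        ((qdft n μ)ᴴ) v u * (qdft n μ) u w =
          (n : ℝ)⁻¹ • f ((ζ ^ ((w : ℤ) - (v : ℤ))) ^ (u : ℕ)) := by
      intro u
      rw [Matrix.conjTranspose_apply]
      show star (((Real.sqrt n)⁻¹ : ℝ) • qomega n μ ^ ((u : ℕ) * (v : ℕ))) *
          (((Real.sqrt n)⁻¹ : ℝ) • qomega n μ ^ ((u : ℕ) * (w : ℕ))) = _
      rw [Quaternion.star_smul, hstarpow, hpow, smul_mul_smul_comm, hsqrt, ← _root_.map_mul,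
        hterm, hterm2]
    rw [Finset.sum_congr rfl (fun u _ => hsummand u), ← Finset.smul_sum, ← _root_.map_sum,
      key w v]
    rw [← hdiag v w]
    congr 1
    by_cases h : v = w
    · subst h; simp
    · rw [if_neg h, if_neg (Ne.symm h)]
  · refine Matrix.ext fun v w => ?_
    rw [Matrix.mul_apply]
    have hsummand : ∀ u : Fin n,
        (qdft n μ) v u * ((qdft n μ)ᴴ) u w =
          (n : ℝ)⁻¹ • f ((ζ ^ ((v : ℤ) - (w : ℤ))) ^ (u : ℕ)) := by
      intro u
      rw [Matrix.conjTranspose_apply]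
      show (((Real.sqrt n)⁻¹ : ℝ) • qomega n μ ^ ((v : ℕ) * (u : ℕ))) *
          star (((Real.sqrt n)⁻¹ : ℝ) • qomega n μ ^ ((w : ℕ) * (u : ℕ))) = _
      rw [Quaternion.star_smul, hstarpow, hpow, smul_mul_smul_comm, hsqrt, ← _root_.map_mul,
        mul_comm (ζ ^ ((v : ℕ) * (u : ℕ))), hterm]
      rw [show ((((v : ℕ) * (u : ℕ) : ℕ) : ℤ) - (((w : ℕ) * (u : ℕ) : ℕ) : ℤ)) =
        (((u : ℕ) * (v : ℕ) : ℕ) : ℤ) - (((u : ℕ) * (w : ℕ) : ℕ) : ℤ) by push_cast; ring]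
      rw [hterm2]
    rw [Finset.sum_congr rfl (fun u _ => hsummand u), ← Finset.smul_sum, ← _root_.map_sum,
      key v w, hdiag v w]
end

section
/- For every n ≥ 1 and every unit pure quaternion μ, one has F_μ² = A and (F_μᴴ)² = A, where A is the n×n flip permutation matrix with A_{st} = 1 if s + t ≡ 0 (mod n) and A_{st} = 0 otherwise (0-indexed). -/
open Quaternion Matrix

/-- The `n×n` flip permutation matrix `A`, with `A_{st} = 1` iff `s + t ≡ 0 (mod n)`
(0-indexed). -/
noncomputable def flipMat (n : ℕ) : Matrix (Fin n) (Fin n) ℍ[ℝ] :=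
  Matrix.of fun s t => if ((s : ℕ) + (t : ℕ)) % n = 0 then 1 else 0

/-- exp of a real multiple of a unit pure quaternion. -/
lemma exp_smul_unit (t : ℝ) (μ : ℍ[ℝ]) (hpure : μ.re = 0) (hunit : ‖μ‖ = 1) :
    NormedSpace.exp (t • μ) = ((Real.cos t : ℝ) : ℍ[ℝ]) + (Real.sin t) • μ := by
  have hre : (t • μ).re = 0 := by simp [hpure]
  have hnorm : ‖t • μ‖ = |t| := by rw [norm_smul, hunit, mul_one, Real.norm_eq_abs]
  rw [Quaternion.exp_of_re_eq_zero _ hre, hnorm]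
  rcases eq_or_ne t 0 with rfl | ht
  · simp
  · rw [smul_smul, Real.cos_abs]
    congr 1
    congr 1
    rcases abs_choice t with h | h
    · rw [h, div_mul_cancel₀ _ ht]
    · rw [h, Real.sin_neg]
      field_simp

lemma qomega_pow (n : ℕ) (μ : ℍ[ℝ]) (m : ℕ) :
    (qomega n μ) ^ m = NormedSpace.exp (((-(2 * Real.pi) / n) * m : ℝ) • μ) := by
  letI : NormedAlgebra ℚ ℍ[ℝ] := NormedAlgebra.restrictScalars ℚ ℝ ℍ[ℝ]
  rw [qomega, ← NormedSpace.exp_nsmul, ← Nat.cast_smul_eq_nsmul ℝ, smul_smul,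
    mul_comm (m : ℝ)]

lemma qomega_pow_eq_one (n : ℕ) (hn : 1 ≤ n) (μ : ℍ[ℝ]) (hpure : μ.re = 0)
    (hunit : ‖μ‖ = 1) (m : ℕ) (h : n ∣ m) : (qomega n μ) ^ m = 1 := by
  obtain ⟨q, rfl⟩ := h
  have hn0 : (n : ℝ) ≠ 0 := Nat.cast_ne_zero.2 (by omega)
  rw [qomega_pow, exp_smul_unit _ _ hpure hunit]
  have ht : (-(2 * Real.pi) / n * (↑(n * q)) : ℝ) = ((2 * (-q : ℤ) : ℤ)) * Real.pi := by
    push_cast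
    field_simp
  rw [ht]
  have hc : Real.cos (((2 * (-q : ℤ) : ℤ)) * Real.pi) = 1 := by
    have := Real.cos_int_mul_two_pi (-q : ℤ)
    convert this using 2
    push_cast; ring
  rw [hc, Real.sin_int_mul_pi]
  simp

lemma qomega_pow_ne_one (n : ℕ) (hn : 1 ≤ n) (μ : ℍ[ℝ]) (hpure : μ.re = 0)
    (hunit : ‖μ‖ = 1) (m : ℕ) (h : ¬ n ∣ m) : (qomega n μ) ^ m ≠ 1 := by
  intro heq
  rw [qomega_pow, exp_smul_unit _ _ hpure hunit] at heq
  have hre := congrArg QuaternionAlgebra.re heq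
  simp [hpure] at hre
  obtain ⟨j, hj⟩ := (Real.cos_eq_one_iff _).1 hre
  have hn0 : (n : ℝ) ≠ 0 := Nat.cast_ne_zero.2 (by omega)
  have hpi : (2 * Real.pi) ≠ 0 := by positivity
  have hr : ((-j) * (n : ℤ) : ℝ) = (m : ℝ) := by
    have h1 : (j : ℝ) * (2 * Real.pi) * n = -(2 * Real.pi) * m := by
      rw [hj]; field_simp
    have h2 : (2 * Real.pi) * ((j : ℝ) * n + m) = 0 := by linear_combination h1
    rcases mul_eq_zero.mp h2 with h3 | h3
    · exact absurd h3 hpi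
    · push_cast; linarith
  have hint : (-j) * (n : ℤ) = (m : ℤ) := by exact_mod_cast hr
  exact h (Int.ofNat_dvd.1 (Dvd.intro_left (-j) hint))

lemma qdft_sq (n : ℕ) (hn : 1 ≤ n) (μ : ℍ[ℝ]) (hpure : μ.re = 0) (hunit : ‖μ‖ = 1) :
    qdft n μ ^ 2 = flipMat n := by
  have hn0 : (n : ℝ) ≠ 0 := Nat.cast_ne_zero.2 (by omega)
  have hsq : ((Real.sqrt n)⁻¹ : ℝ) * (Real.sqrt n)⁻¹ = (n : ℝ)⁻¹ := by
    rw [← mul_inv, Real.mul_self_sqrt (Nat.cast_nonneg n)]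
  apply Matrix.ext
  intro u v
  rw [pow_two, Matrix.mul_apply]
  simp only [qdft, flipMat, Matrix.of_apply]
  have hterm : ∀ k : Fin n,
      (((Real.sqrt n)⁻¹ : ℝ) • (qomega n μ) ^ ((u : ℕ) * (k : ℕ))) *
        (((Real.sqrt n)⁻¹ : ℝ) • (qomega n μ) ^ ((k : ℕ) * (v : ℕ)))
      = ((n : ℝ)⁻¹ : ℝ) • ((qomega n μ) ^ ((u : ℕ) + (v : ℕ))) ^ (k : ℕ) := by
    intro k
    rw [smul_mul_smul_comm, hsq, ← pow_add, ← pow_mul]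
    congr 2
    ring
  rw [Finset.sum_congr rfl fun k _ => hterm k, ← Finset.smul_sum]
  by_cases hdvd : n ∣ ((u : ℕ) + (v : ℕ))
  · rw [if_pos (Nat.dvd_iff_mod_eq_zero.1 hdvd),
      qomega_pow_eq_one n hn μ hpure hunit _ hdvd]
    simp only [one_pow, Finset.sum_const, Finset.card_univ, Fintype.card_fin, nsmul_eq_mul,
      mul_one]
    rw [show ((n : ℍ[ℝ])) = ((n : ℝ) : ℍ[ℝ]) by push_cast; ring, Quaternion.smul_coe]
    rw [inv_mul_cancel₀ hn0]
    rfl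
  · rw [if_neg (fun hc => hdvd (Nat.dvd_iff_mod_eq_zero.2 hc))]
    have hne : (qomega n μ) ^ ((u : ℕ) + (v : ℕ)) ≠ 1 :=
      qomega_pow_ne_one n hn μ hpure hunit _ hdvd
    have hsum : ∑ k : Fin n, ((qomega n μ) ^ ((u : ℕ) + (v : ℕ))) ^ (k : ℕ)
        = ∑ k ∈ Finset.range n, ((qomega n μ) ^ ((u : ℕ) + (v : ℕ))) ^ k :=
      (Finset.sum_range fun k => ((qomega n μ) ^ ((u : ℕ) + (v : ℕ))) ^ k).symm
    rw [hsum, geom_sum_eq hne]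
    rw [← pow_mul, qomega_pow_eq_one n hn μ hpure hunit _ (dvd_mul_left n _)]
    simp

lemma qdft_conjTranspose (n : ℕ) (μ : ℍ[ℝ]) (hpure : μ.re = 0) :
    (qdft n μ)ᴴ = qdft n (-μ) := by
  have hstar : star (qomega n μ) = qomega n (-μ) := by
    rw [qomega, qomega, NormedSpace.star_exp]
    congr 1
    rw [Quaternion.star_smul, (Quaternion.star_eq_neg).2 hpure]
  apply Matrix.ext
  intro u v
  rw [Matrix.conjTranspose_apply]
  simp only [qdft, Matrix.of_apply]
  rw [Quaternion.star_smul, star_pow, hstar, Nat.mul_comm]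

/-- for every `n ≥ 1` and unit pure quaternion `μ`, one has `F_μ² = A` and
`(F_μᴴ)² = A`, where `A` is the flip permutation matrix. -/
theorem qdft_sq_eq_flip (n : ℕ) (hn : 1 ≤ n) (μ : ℍ[ℝ]) (hpure : μ.re = 0) (hunit : ‖μ‖ = 1) :
    qdft n μ ^ 2 = flipMat n ∧ (qdft n μ)ᴴ ^ 2 = flipMat n := by
  refine ⟨qdft_sq n hn μ hpure hunit, ?_⟩
  rw [qdft_conjTranspose n μ hpure]
  exact qdft_sq n hn (-μ) (by simp [hpure]) (by rw [norm_neg, hunit])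
end

section
/- Let n ≥ 1, let μ be a unit pure quaternion, ω = exp(−2πμ/n), and let c = (c⁽⁰⁾,…,c⁽ⁿ⁻¹⁾) be a real vector. Let C = circ(c), viewed as an n×n quaternion matrix. Then F_μ C F_μᴴ is the diagonal matrix Diag(λ₀,…,λ_{n−1}) with λ_k = Σ_{v=0}^{n−1} ω^{kv} c⁽ᵛ⁾; equivalently, the diagonal equals √n·(F_μ c). -/
open Quaternion Matrix

namespace QdftAux

noncomputable def f (μ : ℍ[ℝ]) (t : ℝ) : ℍ[ℝ] := NormedSpace.exp (t • μ)

lemma f_closed {μ : ℍ[ℝ]} (hpure : μ.re = 0) (hunit : ‖μ‖ = 1) (t : ℝ) :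
    f μ t = ((Real.cos t : ℝ) : ℍ[ℝ]) + (Real.sin t) • μ := by
  have hre : (t • μ).re = 0 := by simp [hpure]
  rw [f, Quaternion.exp_of_re_eq_zero _ hre]
  have hnorm : ‖t • μ‖ = |t| := by rw [norm_smul, hunit, mul_one, Real.norm_eq_abs]
  rw [hnorm, Real.cos_abs, smul_smul]
  congr 1
  rcases eq_or_ne t 0 with rfl | h
  · simp
  · rcases abs_cases t with ⟨h1, _⟩ | ⟨h1, _⟩
    · rw [h1, div_mul_cancel₀ _ h]
    · rw [h1, Real.sin_neg, neg_div_neg_eq, div_mul_cancel₀ _ h]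

lemma f_zero (μ : ℍ[ℝ]) : f μ 0 = 1 := by
  rw [f, zero_smul, NormedSpace.exp_zero]

lemma f_add (μ : ℍ[ℝ]) (a b : ℝ) : f μ (a + b) = f μ a * f μ b := by
  rw [f, f, f, add_smul]
  let +nondep : NormedAlgebra ℚ ℍ[ℝ] := .restrictScalars ℚ ℝ ℍ[ℝ]
  exact NormedSpace.exp_add_of_commute (by rw [Commute, SemiconjBy, smul_mul_smul_comm,
    smul_mul_smul_comm, mul_comm a b])

lemma f_pow (μ : ℍ[ℝ]) (t : ℝ) (a : ℕ) : (f μ t) ^ a = f μ (a * t) := by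
  let +nondep : NormedAlgebra ℚ ℍ[ℝ] := .restrictScalars ℚ ℝ ℍ[ℝ]
  rw [f, f, ← NormedSpace.exp_nsmul, ← Nat.cast_smul_eq_nsmul ℝ, smul_smul]

lemma star_f {μ : ℍ[ℝ]} (hpure : μ.re = 0) (t : ℝ) : star (f μ t) = f μ (-t) := by
  have hs : star μ = -μ := by ext <;> simp [hpure]
  rw [f, f, NormedSpace.star_exp, Quaternion.star_smul, hs, smul_neg, neg_smul]

lemma f_eq_one_iff {μ : ℍ[ℝ]} (hpure : μ.re = 0) (hunit : ‖μ‖ = 1) (t : ℝ) :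
    f μ t = 1 ↔ Real.cos t = 1 := by
  rw [f_closed hpure hunit]
  constructor
  · intro h
    have := congrArg QuaternionAlgebra.re h
    simpa [hpure] using this
  · intro h
    have hsin : Real.sin t = 0 := by
      have := Real.sin_sq_add_cos_sq t
      nlinarith
    simp [h, hsin]

lemma f_period {μ : ℍ[ℝ]} (hpure : μ.re = 0) (hunit : ‖μ‖ = 1) (x : ℝ) (k : ℤ) :
    f μ (x + (k : ℝ) * (2 * Real.pi)) = f μ x := by
  rw [f_add, (f_eq_one_iff hpure hunit _).mpr (Real.cos_int_mul_two_pi k), mul_one]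

lemma geom_zero {n : ℕ} {z : ℍ[ℝ]} (h : z ^ n = 1) (hz : z ≠ 1) :
    ∑ i ∈ Finset.range n, z ^ i = 0 := by
  have h2 := geom_sum_mul z n
  rw [h, sub_self] at h2
  rcases mul_eq_zero.mp h2 with h3 | h3
  · exact h3
  · exact absurd (sub_eq_zero.mp h3) hz

end QdftAux


/-- for a real vector `c`, the real circulant matrix `C = circ(c)` (viewed as a
quaternion matrix) satisfies `F_μ C F_μᴴ = Diag(λ₀,…,λ_{n−1})` with
`λ_k = Σ_{v=0}^{n−1} ω^{kv} c⁽ᵛ⁾`; equivalently, the diagonal equals `√n·(F_μ c)`. -/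
theorem qdft_diagonalizes_real_circulant (n : ℕ) (hn : 1 ≤ n) (μ : ℍ[ℝ])
    (hpure : μ.re = 0) (hunit : ‖μ‖ = 1) (c : Fin n → ℝ) :
    qdft n μ * Matrix.circulant (fun x => ((c x : ℝ) : ℍ[ℝ])) * (qdft n μ)ᴴ =
      Matrix.diagonal (fun k : Fin n =>
        ∑ v : Fin n, (qomega n μ) ^ ((k : ℕ) * (v : ℕ)) * (c v : ℍ[ℝ]))
    ∧ ∀ k : Fin n,
        (∑ v : Fin n, (qomega n μ) ^ ((k : ℕ) * (v : ℕ)) * (c v : ℍ[ℝ])) =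
          Real.sqrt n • (qdft n μ).mulVec (fun v => ((c v : ℝ) : ℍ[ℝ])) k := by
  have hπ := Real.pi_pos
  haveI : NeZero n := ⟨by omega⟩
  have hn0 : (0:ℝ) < n := by exact_mod_cast hn
  have hn0' : (n:ℝ) ≠ 0 := ne_of_gt hn0
  set s : ℝ := -(2 * Real.pi) / n with hs_def
  have hns : (n:ℝ) * s = -(2 * Real.pi) := by
    rw [hs_def]; field_simp
  have hωf : ∀ a : ℕ, (qomega n μ) ^ a = QdftAux.f μ ((a : ℝ) * s) := by
    intro a
    rw [show qomega n μ = QdftAux.f μ s from rfl, QdftAux.f_pow]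
  constructor
  · refine Matrix.ext fun u w => ?_
    -- Step 1: expand the entry into a double sum of normalized terms
    have hterm : ∀ v2 v1 : Fin n,
        (((Real.sqrt n)⁻¹ : ℝ) • (qomega n μ) ^ ((u:ℕ) * (v1:ℕ))) * ((c (v1 - v2) : ℝ) : ℍ[ℝ]) *
          star (((Real.sqrt n)⁻¹ : ℝ) • (qomega n μ) ^ ((w:ℕ) * (v2:ℕ)))
        = ((n:ℝ)⁻¹) • (QdftAux.f μ ((((u:ℕ):ℝ) * ((v1:ℕ):ℝ) - ((w:ℕ):ℝ) * ((v2:ℕ):ℝ)) * s) *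
            ((c (v1 - v2) : ℝ) : ℍ[ℝ])) := by
      intro v2 v1
      rw [Quaternion.star_smul, hωf, hωf, QdftAux.star_f hpure]
      rw [smul_mul_assoc, smul_mul_assoc, mul_smul_comm, smul_smul]
      congr 1
      · rw [← mul_inv, Real.mul_self_sqrt (le_of_lt hn0)]
      · conv_lhs => rw [mul_assoc, Quaternion.coe_commutes, ← mul_assoc, ← QdftAux.f_add]
        congr 2
        push_cast
        ring
    have hentry : (qdft n μ * Matrix.circulant (fun x => ((c x : ℝ) : ℍ[ℝ])) * (qdft n μ)ᴴ) u w
        = ((n:ℝ)⁻¹) • ∑ v2 : Fin n, ∑ v1 : Fin n,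
            (QdftAux.f μ ((((u:ℕ):ℝ) * ((v1:ℕ):ℝ) - ((w:ℕ):ℝ) * ((v2:ℕ):ℝ)) * s) *
              ((c (v1 - v2) : ℝ) : ℍ[ℝ])) := by
      rw [Matrix.mul_apply]
      rw [Finset.smul_sum]
      refine Finset.sum_congr rfl fun v2 _ => ?_
      rw [Matrix.mul_apply, Matrix.conjTranspose_apply, Finset.sum_mul, Finset.smul_sum]
      refine Finset.sum_congr rfl fun v1 _ => ?_
      simpa [qdft, Matrix.circulant_apply] using hterm v2 v1
    rw [hentry]
    -- Step 2: reindex the inner sum by v1 = v2 + d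
    have hreindex : ∀ v2 : Fin n,
        (∑ v1 : Fin n, (QdftAux.f μ ((((u:ℕ):ℝ) * ((v1:ℕ):ℝ) - ((w:ℕ):ℝ) * ((v2:ℕ):ℝ)) * s) *
            ((c (v1 - v2) : ℝ) : ℍ[ℝ])))
        = ∑ d : Fin n,
            ((QdftAux.f μ ((((u:ℕ):ℝ) - ((w:ℕ):ℝ)) * s)) ^ ((v2:ℕ)) *
              (QdftAux.f μ ((((u:ℕ):ℝ) * ((d:ℕ):ℝ)) * s) * ((c d : ℝ) : ℍ[ℝ]))) := by
      intro v2
      rw [← Equiv.sum_comp (Equiv.addLeft v2) (fun v1 : Fin n =>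
          QdftAux.f μ ((((u:ℕ):ℝ) * ((v1:ℕ):ℝ) - ((w:ℕ):ℝ) * ((v2:ℕ):ℝ)) * s) *
            ((c (v1 - v2) : ℝ) : ℍ[ℝ]))]
      refine Finset.sum_congr rfl fun d _ => ?_
      have hsub : (Equiv.addLeft v2) d - v2 = d := by
        simp [Equiv.addLeft, add_sub_cancel_left]
      have hval : (((Equiv.addLeft v2) d : Fin n) : ℕ) = ((v2:ℕ) + (d:ℕ)) % n := by
        simp [Equiv.addLeft, Fin.add_def]
      rw [hsub, hval]
      set m : ℕ := (v2:ℕ) + (d:ℕ) with hm_def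
      set q : ℕ := m / n with hq_def
      have hmod : ((m % n : ℕ) : ℝ) = (m:ℝ) - (n:ℝ) * (q:ℝ) := by
        have h := Nat.mod_add_div m n
        have h2 : ((m % n : ℕ) : ℝ) + (n:ℝ) * (q:ℝ) = (m:ℝ) := by exact_mod_cast h
        linarith
      have hmr : (m:ℝ) = ((v2:ℕ):ℝ) + ((d:ℕ):ℝ) := by rw [hm_def]; push_cast; ring
      have hcast : ((((u:ℕ) * q : ℕ) : ℤ) : ℝ) = ((u:ℕ):ℝ) * (q:ℝ) := by push_cast; ring
      have harg : (((u:ℕ):ℝ) * ((m % n : ℕ):ℝ) - ((w:ℕ):ℝ) * ((v2:ℕ):ℝ)) * s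
          = ((((v2:ℕ):ℝ) * ((((u:ℕ):ℝ) - ((w:ℕ):ℝ)) * s) + (((u:ℕ):ℝ) * ((d:ℕ):ℝ)) * s)
            + (((((u:ℕ) * q : ℕ)) : ℤ) : ℝ) * (2 * Real.pi)) := by
        rw [hmod, hcast]
        linear_combination (((u:ℕ):ℝ) * s) * hmr + (-(((u:ℕ):ℝ) * (q:ℝ))) * hns
      conv_rhs => rw [← mul_assoc, QdftAux.f_pow, ← QdftAux.f_add]
      rw [harg, QdftAux.f_period hpure hunit]
    rw [Finset.sum_congr rfl fun v2 _ => hreindex v2]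
    rw [Finset.sum_comm]
    -- Step 3: evaluate the geometric sum
    set z : ℍ[ℝ] := QdftAux.f μ ((((u:ℕ):ℝ) - ((w:ℕ):ℝ)) * s) with hz_def
    have hS : ∑ v2 : Fin n, z ^ ((v2:ℕ)) = ∑ i ∈ Finset.range n, z ^ i :=
      Fin.sum_univ_eq_sum_range (fun i => z ^ i) n
    have hzn : z ^ n = 1 := by
      rw [hz_def, QdftAux.f_pow]
      have : (n:ℝ) * ((((u:ℕ):ℝ) - ((w:ℕ):ℝ)) * s)
          = 0 + (((w:ℤ) - (u:ℤ) : ℤ) : ℝ) * (2 * Real.pi) := by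
        push_cast
        linear_combination (((u:ℕ):ℝ) - ((w:ℕ):ℝ)) * hns
      rw [this, QdftAux.f_period hpure hunit, QdftAux.f_zero]
    by_cases huw : u = w
    · subst huw
      have hz1 : z = 1 := by
        rw [hz_def, show ((((u:ℕ):ℝ) - ((u:ℕ):ℝ)) * s) = 0 by ring, QdftAux.f_zero]
      rw [Matrix.diagonal_apply_eq]
      have : ∀ d : Fin n, ∑ v2 : Fin n,
          z ^ ((v2:ℕ)) * (QdftAux.f μ ((((u:ℕ):ℝ) * ((d:ℕ):ℝ)) * s) * ((c d : ℝ) : ℍ[ℝ]))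
          = (n : ℍ[ℝ]) * (QdftAux.f μ ((((u:ℕ):ℝ) * ((d:ℕ):ℝ)) * s) * ((c d : ℝ) : ℍ[ℝ])) := by
        intro d
        rw [← Finset.sum_mul, hS, hz1]
        simp
      rw [Finset.sum_congr rfl fun d _ => this d, ← Finset.mul_sum]
      have hcoe : ((n : ℕ) : ℍ[ℝ]) = (((n:ℝ)) : ℍ[ℝ]) := by push_cast; rfl
      rw [hcoe, Quaternion.coe_mul_eq_smul, smul_smul, inv_mul_cancel₀ hn0', one_smul]
      refine Finset.sum_congr rfl fun v _ => ?_
      rw [hωf]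
      congr 2
      push_cast
      ring
    · have hz1 : z ≠ 1 := by
        intro h
        rw [hz_def, QdftAux.f_eq_one_iff hpure hunit] at h
        have habs : |(((u:ℕ):ℝ) - ((w:ℕ):ℝ)) * s| < 2 * Real.pi := by
          have hu := u.isLt
          have hw := w.isLt
          have h1 : |((u:ℕ):ℝ) - ((w:ℕ):ℝ)| < n := by
            rw [abs_lt]
            constructor
            · have : ((w:ℕ):ℝ) < n := by exact_mod_cast hw
              have : (0:ℝ) ≤ ((u:ℕ):ℝ) := Nat.cast_nonneg _
              linarith [show ((w:ℕ):ℝ) < n by exact_mod_cast hw]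
            · have : ((u:ℕ):ℝ) < n := by exact_mod_cast hu
              have : (0:ℝ) ≤ ((w:ℕ):ℝ) := Nat.cast_nonneg _
              linarith [show ((u:ℕ):ℝ) < n by exact_mod_cast hu]
          have hs_abs : |s| = 2 * Real.pi / n := by
            rw [hs_def, abs_div, abs_neg, abs_of_pos (by positivity), abs_of_pos hn0]
          rw [abs_mul, hs_abs]
          calc |((u:ℕ):ℝ) - ((w:ℕ):ℝ)| * (2 * Real.pi / n)
              < (n:ℝ) * (2 * Real.pi / n) := by
                exact mul_lt_mul_of_pos_right h1 (by positivity)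
            _ = 2 * Real.pi := by field_simp
        have habs' := abs_lt.mp habs
        have ht0 := (Real.cos_eq_one_iff_of_lt_of_lt habs'.1 habs'.2).mp h
        have hs0 : s ≠ 0 := by
          rw [hs_def]
          intro h'
          have := div_eq_zero_iff.mp h'
          rcases this with h'' | h''
          · nlinarith
          · exact hn0' h''
        have : ((u:ℕ):ℝ) = ((w:ℕ):ℝ) := by
          rcases mul_eq_zero.mp ht0 with h'' | h''
          · linarith [sub_eq_zero.mp h'']
          · exact absurd h'' hs0
        exact huw (Fin.ext (by exact_mod_cast this))
      rw [Matrix.diagonal_apply_ne _ huw]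
      have : ∀ d : Fin n, ∑ v2 : Fin n,
          z ^ ((v2:ℕ)) * (QdftAux.f μ ((((u:ℕ):ℝ) * ((d:ℕ):ℝ)) * s) * ((c d : ℝ) : ℍ[ℝ]))
          = 0 := by
        intro d
        rw [← Finset.sum_mul, hS, QdftAux.geom_zero hzn hz1, zero_mul]
      rw [Finset.sum_congr rfl fun d _ => this d]
      simp
  · intro k
    rw [Matrix.mulVec]
    simp only [dotProduct, qdft, Matrix.of_apply]
    rw [Finset.smul_sum]
    refine (Finset.sum_congr rfl fun v _ => ?_).symm
    rw [smul_mul_assoc, smul_smul, mul_inv_cancel₀ (by positivity : Real.sqrt n ≠ 0), one_smul]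
end

section
/- Let J be the n×n cyclic shift matrix J = circ(e₁) (with entry 1 at position (u,v) exactly when u ≡ v + 1 (mod n), and 0 elsewhere), viewed as a quaternion matrix, and let μ be a unit pure quaternion with ω = exp(−2πμ/n). Then J·F_μᴴ = F_μᴴ·Diag(1, ω, ω², …, ω^{n−1}); in particular the columns of F_μᴴ are eigenvectors of J with eigenvalues 1, ω, …, ω^{n−1}. -/
open Quaternion Matrix

lemma qomega_pow_n (n : ℕ) (hn : 1 ≤ n) (μ : ℍ[ℝ]) (hpure : μ.re = 0)
    (hunit : ‖μ‖ = 1) : qomega n μ ^ n = 1 := by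
  have hn0 : (n : ℝ) ≠ 0 := Nat.cast_ne_zero.2 (by omega)
  let +nondep : NormedAlgebra ℚ ℍ := .restrictScalars ℚ ℝ ℍ
  rw [qomega, ← NormedSpace.exp_nsmul, ← Nat.cast_smul_eq_nsmul ℝ, smul_smul]
  have : (n : ℝ) * (-(2 * Real.pi) / n) = -(2 * Real.pi) := by field_simp
  rw [this]
  have hre : ((-(2 * Real.pi)) • μ).re = 0 := by simp [hpure]
  rw [Quaternion.exp_of_re_eq_zero _ hre]
  have hnorm : ‖(-(2 * Real.pi)) • μ‖ = 2 * Real.pi := by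
    rw [norm_smul, hunit, mul_one, Real.norm_eq_abs, abs_neg,
      abs_of_pos (by positivity)]
  rw [hnorm, Real.cos_two_pi, Real.sin_two_pi]
  simp

lemma qomega_star_mul (n : ℕ) (μ : ℍ[ℝ]) (hpure : μ.re = 0) :
    star (qomega n μ) * qomega n μ = 1 ∧ qomega n μ * star (qomega n μ) = 1 := by
  set x := ((-(2 * Real.pi) / n : ℝ) • μ) with hx
  have hstar : star x = -x := by
    rw [hx, Quaternion.star_smul, (Quaternion.star_eq_neg).2 hpure, smul_neg]
  have h1 : star (qomega n μ) = NormedSpace.exp (-x) := by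
    rw [qomega, NormedSpace.star_exp, hstar]
  let +nondep : NormedAlgebra ℚ ℍ := .restrictScalars ℚ ℝ ℍ
  constructor
  · rw [h1, qomega, ← NormedSpace.exp_add_of_commute (Commute.refl x).neg_left,
      neg_add_cancel, NormedSpace.exp_zero]
  · rw [h1, qomega, ← NormedSpace.exp_add_of_commute (Commute.refl x).neg_right,
      add_neg_cancel, NormedSpace.exp_zero]

/-- the cyclic shift matrix `J` (with entry 1 at `(u,v)` exactly when
`u ≡ v + 1 (mod n)`) satisfies `J·F_μᴴ = F_μᴴ·Diag(1, ω, …, ω^{n−1})`; in particular the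
columns of `F_μᴴ` are eigenvectors of `J` with (right) eigenvalues `1, ω, …, ω^{n−1}`. -/
theorem cyclic_shift_eigenvectors (n : ℕ) (hn : 1 ≤ n) (μ : ℍ[ℝ])
    (hpure : μ.re = 0) (hunit : ‖μ‖ = 1) (J : Matrix (Fin n) (Fin n) ℍ[ℝ])
    (hJ : J = Matrix.of fun u v : Fin n =>
      if (u : ℕ) = ((v : ℕ) + 1) % n then (1 : ℍ[ℝ]) else 0) :
    J * (qdft n μ)ᴴ =
      (qdft n μ)ᴴ * Matrix.diagonal (fun k : Fin n => (qomega n μ) ^ (k : ℕ))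
    ∧ ∀ k : Fin n,
        J.mulVec (fun u => (qdft n μ)ᴴ u k) =
          fun u => (qdft n μ)ᴴ u k * (qomega n μ) ^ (k : ℕ) := by
  haveI : NeZero n := ⟨by omega⟩
  set ω := qomega n μ with hω
  set σ := star ω with hσ
  have hσω : σ * ω = 1 := (qomega_star_mul n μ hpure).1
  have hωσ : ω * σ = 1 := (qomega_star_mul n μ hpure).2
  have hωn : ω ^ n = 1 := qomega_pow_n n hn μ hpure hunit
  have hσn : σ ^ n = 1 := by rw [hσ, ← star_pow, hωn, star_one]
  have hcomm : Commute σ ω := by unfold Commute SemiconjBy; rw [hσω, hωσ]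
  have hσωk : ∀ k : ℕ, σ ^ k * ω ^ k = 1 := fun k => by
    rw [← hcomm.mul_pow, hσω, one_pow]
  -- value-level facts about `u - 1` in `Fin n`
  have hval1 : ∀ v : Fin n, (((v : ℕ) + 1) % n) = ((v + 1 : Fin n) : ℕ) := by
    intro v
    rw [Fin.val_add, Fin.val_one', Nat.add_mod_mod]
  have hmod : ∀ u : Fin n, ((((u - 1 : Fin n)) : ℕ) + 1) % n = (u : ℕ) := by
    intro u
    rw [hval1 (u - 1), sub_add_cancel]
  have hcond : ∀ u v : Fin n, ((u : ℕ) = ((v : ℕ) + 1) % n) ↔ v = u - 1 := by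
    intro u v
    rw [hval1 v]
    constructor
    · intro h
      exact eq_sub_iff_add_eq.2 (Fin.ext h).symm
    · intro h
      exact congrArg Fin.val (eq_sub_iff_add_eq.1 h).symm
  -- key pointwise identity
  have key : ∀ (u k : Fin n),
      σ ^ ((k : ℕ) * (((u - 1 : Fin n)) : ℕ)) = σ ^ ((k : ℕ) * (u : ℕ)) * ω ^ (k : ℕ) := by
    intro u k
    set a : ℕ := ((u - 1 : Fin n) : ℕ) with ha
    have hme : (k : ℕ) * a + (k : ℕ) ≡ (k : ℕ) * (u : ℕ) [MOD n] := by
      have h1 : (a + 1) ≡ (u : ℕ) [MOD n] := by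
        unfold Nat.ModEq
        rw [hmod u, Nat.mod_eq_of_lt u.isLt]
      calc (k : ℕ) * a + (k : ℕ) = (k : ℕ) * (a + 1) := by ring
        _ ≡ (k : ℕ) * (u : ℕ) [MOD n] := Nat.ModEq.mul_left _ h1
    have hpow : σ ^ ((k : ℕ) * a + (k : ℕ)) = σ ^ ((k : ℕ) * (u : ℕ)) := by
      rw [pow_eq_pow_mod _ hσn, pow_eq_pow_mod ((k : ℕ) * (u : ℕ)) hσn, hme]
    calc σ ^ ((k : ℕ) * a)
        = σ ^ ((k : ℕ) * a) * (σ ^ (k : ℕ) * ω ^ (k : ℕ)) := by rw [hσωk, mul_one]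
      _ = σ ^ ((k : ℕ) * a + (k : ℕ)) * ω ^ (k : ℕ) := by rw [pow_add, mul_assoc]
      _ = σ ^ ((k : ℕ) * (u : ℕ)) * ω ^ (k : ℕ) := by rw [hpow]
  have hentry : ∀ u k : Fin n, (qdft n μ)ᴴ u k
      = ((Real.sqrt n)⁻¹ : ℝ) • σ ^ ((k : ℕ) * (u : ℕ)) := by
    intro u k
    rw [conjTranspose_apply, qdft, of_apply, Quaternion.star_smul, star_pow, ← hσ]
  have hmain : J * (qdft n μ)ᴴ =
      (qdft n μ)ᴴ * Matrix.diagonal (fun k : Fin n => ω ^ (k : ℕ)) := by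
    refine Matrix.ext fun u k => ?_
    rw [Matrix.mul_apply, Matrix.mul_diagonal, hJ]
    rw [Finset.sum_eq_single (u - 1)]
    · rw [of_apply, if_pos (by rw [hmod u]), one_mul, hentry, hentry,
        smul_mul_assoc, key u k]
    · intro v _ hv
      rw [of_apply, if_neg, zero_mul]
      intro hc
      exact hv ((hcond u v).1 hc)
    · intro h
      exact absurd (Finset.mem_univ _) h
  refine ⟨hmain, fun k => ?_⟩
  funext u
  have h2 := congrFun (congrFun hmain u) k
  rw [Matrix.mul_apply, Matrix.mul_diagonal] at h2
  simpa [Matrix.mulVec, dotProduct] using h2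
end

section
/- Let C be any n×n quaternion circulant matrix and μ a unit pure quaternion. Then every entry of F_μ C F_μᴴ at a position (s,t) (0-indexed) with s ≠ t and s + t ≢ 0 (mod n) is zero; i.e., the nonzero entries of F_μ C F_μᴴ can appear only on the main diagonal and at the positions (s,t) with s + t ≡ 0 (mod n). -/
open Quaternion Matrix

private lemma geom_zero (n : ℕ) (w : ℍ[ℝ]) (hw : w ^ n = 1) (hw1 : w ≠ 1) :
    ∑ i ∈ Finset.range n, w ^ i = 0 := by
  have h := geom_sum_mul w n
  rw [hw, sub_self] at h
  rcases mul_eq_zero.mp h with h' | h'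
  · exact h'
  · exact absurd (sub_eq_zero.mp h') hw1

set_option maxHeartbeats 1000000 in
/-- for any quaternion circulant matrix `C` and unit pure quaternion `μ`, every
entry of `F_μ C F_μᴴ` at a position `(s,t)` with `s ≠ t` and `s + t ≢ 0 (mod n)` is zero;
i.e. the nonzero entries can appear only on the main diagonal and at positions with
`s + t ≡ 0 (mod n)`. -/
theorem qdft_conj_circulant_support (n : ℕ) (hn : 1 ≤ n) (μ : ℍ[ℝ])
    (hpure : μ.re = 0) (hunit : ‖μ‖ = 1) (c : Fin n → ℍ[ℝ]) :
    ∀ s t : Fin n, s ≠ t → ((s : ℕ) + (t : ℕ)) % n ≠ 0 →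
      (qdft n μ * Matrix.circulant c * (qdft n μ)ᴴ) s t = 0 := by
  intro s t hst hsum
  haveI : NeZero n := ⟨by omega⟩
  -- μ squares to -1
  have hstarμ : star μ = -μ := by ext <;> simp [hpure]
  have hμ2 : μ * μ = -1 := by
    have h1 : μ * star μ = ((Quaternion.normSq μ : ℝ) : ℍ[ℝ]) := Quaternion.self_mul_star μ
    have h2 : Quaternion.normSq μ = 1 := by
      rw [Quaternion.normSq_eq_norm_mul_self, hunit]; ring
    rw [hstarμ, mul_neg, h2] at h1
    have := neg_eq_iff_eq_neg.mp h1
    rw [this]; simp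
  set φ : ℂ →ₐ[ℝ] ℍ[ℝ] := Complex.liftAux μ hμ2 with hφdef
  set θ : ℝ := -(2 * Real.pi) / n with hθdef
  set ζ : ℂ := Complex.exp (θ * Complex.I) with hζdef
  set ω : ℍ[ℝ] := qomega n μ with hωdef
  -- ω = φ ζ
  have hω : ω = φ ζ := by
    have hφcont : Continuous φ := φ.toLinearMap.continuous_of_finiteDimensional
    have h1 : ((θ : ℂ) * Complex.I) = θ • Complex.I := (Complex.real_smul).symm
    rw [hζdef, h1, Complex.exp_eq_exp_ℂ,
      NormedSpace.map_exp φ hφcont]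
    rw [hωdef, qomega]
    congr 1
    rw [_root_.map_smul, Complex.liftAux_apply_I]
  -- ζ is a primitive-type n-th root of unity
  have hζn : ζ ^ n = 1 := by
    rw [hζdef, ← Complex.exp_nat_mul]
    have hθn : (n : ℝ) * θ = -(2 * Real.pi) := by
      rw [hθdef]; field_simp
    have h2 : (n : ℂ) * ((θ:ℂ) * Complex.I) = ((-(2*Real.pi) : ℝ) : ℂ) * Complex.I := by
      push_cast
      rw [← mul_assoc]
      norm_cast
      rw [hθn]
      push_cast; ring
    rw [h2]
    push_cast
    rw [neg_mul, Complex.exp_neg, Complex.exp_two_pi_mul_I, inv_one]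
  have hζm : ∀ m : ℕ, ζ ^ m = 1 → n ∣ m := by
    intro m h
    rw [hζdef, ← Complex.exp_nat_mul, Complex.exp_eq_one_iff] at h
    obtain ⟨k, hk⟩ := h
    have hI : ((m : ℂ) * ((θ : ℝ) * Complex.I)) = ((m * θ : ℝ) : ℂ) * Complex.I := by
      push_cast; ring
    have hI2 : (k : ℂ) * (2 * Real.pi * Complex.I) = ((k * (2 * Real.pi) : ℝ) : ℂ) * Complex.I := by
      push_cast; ring
    rw [hI, hI2] at hk
    have hk2 := mul_right_cancel₀ Complex.I_ne_zero hk
    have hr : (m : ℝ) * θ = k * (2 * Real.pi) := by exact_mod_cast hk2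
    have hn0 : (n : ℝ) ≠ 0 := by positivity
    have hmr : (m : ℝ) = (-k : ℤ) * n := by
      have hpi := Real.pi_pos
      rw [hθdef] at hr
      field_simp at hr
      push_cast
      nlinarith [hr]
    have hmz : (m : ℤ) = -k * n := by exact_mod_cast hmr
    exact Int.ofNat_dvd.mp ⟨-k, by rw [hmz]; ring⟩
  have hφinj : Function.Injective φ := φ.toRingHom.injective
  have hωn : ω ^ n = 1 := by
    rw [hω, ← map_pow, hζn, _root_.map_one]
  have hωm : ∀ m : ℕ, ω ^ m = 1 → n ∣ m := by
    intro m h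
    refine hζm m (hφinj ?_)
    rw [map_pow, ← hω, h, _root_.map_one]
  -- star of ω
  have hstarφ : ∀ z : ℂ, star (φ z) = φ (starRingEnd ℂ z) := by
    intro z
    rw [hφdef, Complex.liftAux_apply, Complex.liftAux_apply]
    simp [hstarμ, sub_eq_add_neg]
  have hσω : star ω * ω = 1 := by
    rw [hω, hstarφ, ← _root_.map_mul]
    have h1 : starRingEnd ℂ ζ * ζ = (Complex.normSq ζ : ℂ) := by
      rw [mul_comm, Complex.mul_conj]
    have h2 : Complex.normSq ζ = 1 := by
      rw [hζdef, Complex.normSq_eq_norm_sq, Complex.norm_exp_ofReal_mul_I]; norm_num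
    rw [h1, h2]
    simp
  have hσpow : star ω = ω ^ (n - 1) := by
    have h1 : ω * ω ^ (n - 1) = 1 := by
      rw [← pow_succ']
      have : n - 1 + 1 = n := by omega
      rw [this, hωn]
    calc star ω = star ω * (ω * ω ^ (n - 1)) := by rw [h1, mul_one]
    _ = (star ω * ω) * ω ^ (n - 1) := by rw [mul_assoc]
    _ = ω ^ (n - 1) := by rw [hσω, one_mul]
  -- the character e : ZMod n → ℍ
  set e : ZMod n → ℍ[ℝ] := fun x => ω ^ x.val with hedef
  have hbridge : ∀ m : ℕ, ω ^ m = e (m : ZMod n) := by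
    intro m
    show ω ^ m = ω ^ (ZMod.val (m : ZMod n))
    rw [ZMod.val_natCast, ← pow_eq_pow_mod m hωn]
  have he_add : ∀ x y : ZMod n, e (x + y) = e x * e y := by
    intro x y
    show ω ^ _ = ω ^ _ * ω ^ _
    rw [← pow_add, ZMod.val_add, ← pow_eq_pow_mod _ hωn]
  have hvalcast : ∀ x : ZMod n, ((x.val : ℕ) : ZMod n) = x := fun x =>
    ZMod.natCast_rightInverse x
  have he_starpow : ∀ m : ℕ, (star ω) ^ m = e (-(m : ZMod n)) := by
    intro m
    rw [hσpow, ← pow_mul, hbridge]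
    congr 1
    push_cast [Nat.cast_sub (show 1 ≤ n from hn)]
    simp [ZMod.natCast_self]
  -- the key vanishing sum
  have hkey : ∀ d : ZMod n, d ≠ 0 → ∑ u : Fin n, e (d * ((u : ℕ) : ZMod n)) = 0 := by
    intro d hd
    have hterm : ∀ m : ℕ, e (d * (m : ZMod n)) = (ω ^ d.val) ^ m := by
      intro m
      rw [← pow_mul, hbridge]
      congr 1
      push_cast [hvalcast]
      ring
    have hwn : (ω ^ d.val) ^ n = 1 := by
      rw [← pow_mul, mul_comm, pow_mul, hωn, one_pow]
    have hw1 : ω ^ d.val ≠ 1 := by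
      intro h
      have hdvd := hωm d.val h
      have hlt : d.val < n := ZMod.val_lt d
      have hne : d.val ≠ 0 := fun h0 => hd ((ZMod.val_eq_zero d).mp h0)
      have := Nat.le_of_dvd (Nat.pos_of_ne_zero hne) hdvd
      omega
    calc ∑ u : Fin n, e (d * ((u : ℕ) : ZMod n)) = ∑ u : Fin n, (ω ^ d.val) ^ (u : ℕ) := by
          simp only [hterm]
    _ = ∑ i ∈ Finset.range n, (ω ^ d.val) ^ i := Fin.sum_univ_eq_sum_range _ n
    _ = 0 := geom_zero n _ hwn hw1
  -- explicit forms of ω and star ω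
  have hωform : ω = ((ζ.re : ℝ) : ℍ[ℝ]) + ζ.im • μ := by
    rw [hω, hφdef, Complex.liftAux_apply]
    simp [Quaternion.algebraMap_def]
  have hσform : star ω = ((ζ.re : ℝ) : ℍ[ℝ]) - ζ.im • μ := by
    rw [hωform]
    simp [hstarμ, sub_eq_add_neg]
  -- commutation rules
  have hcommA : ∀ p : ℍ[ℝ], μ * p = p * μ → ∀ x : ZMod n, e x * p = p * e x := by
    intro p hp x
    have h1 : ω * p = p * ω := by
      rw [hωform]
      rw [add_mul, mul_add, smul_mul_assoc, mul_smul_comm, hp, Quaternion.coe_mul_eq_smul,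
        Quaternion.mul_coe_eq_smul]
    exact ((Commute.pow_left (h1 : Commute ω p) x.val).eq)
  have hcommB : ∀ p : ℍ[ℝ], μ * p = -(p * μ) → ∀ x : ZMod n, e x * p = p * e (-x) := by
    intro p hp x
    have h1 : ω * p = p * star ω := by
      rw [hσform, hωform, add_mul, mul_sub, smul_mul_assoc, mul_smul_comm, hp,
        Quaternion.coe_mul_eq_smul, Quaternion.mul_coe_eq_smul, smul_neg, sub_eq_add_neg]
    have h2 : ∀ m : ℕ, ω ^ m * p = p * (star ω) ^ m := by
      intro m
      induction m with
      | zero => simp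
      | succ m ih =>
        rw [pow_succ, pow_succ, mul_assoc, h1, ← mul_assoc, ih, mul_assoc]
    show ω ^ x.val * p = p * e (-x)
    rw [h2 x.val, he_starpow, hvalcast]
  -- the entry as a double sum
  set r : ℝ := (Real.sqrt n)⁻¹ with hrdef
  set σ : ℍ[ℝ] := star ω with hσdef
  have hF : ∀ u v : Fin n, qdft n μ s u = r • ω ^ ((s : ℕ) * (u : ℕ)) := fun u v => rfl
  have hFH : ∀ v : Fin n, (qdft n μ)ᴴ v t = r • σ ^ ((t : ℕ) * (v : ℕ)) := by
    intro v
    rw [conjTranspose_apply]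
    show star (r • ω ^ ((t : ℕ) * (v : ℕ))) = _
    rw [Quaternion.star_smul, star_pow, hσdef]
  clear_value ω
  have hentry : (qdft n μ * Matrix.circulant c * (qdft n μ)ᴴ) s t
      = ∑ v : Fin n, ∑ u : Fin n,
          (r * r) • (ω ^ ((s : ℕ) * (u : ℕ)) * c (u - v) * σ ^ ((t : ℕ) * (v : ℕ))) := by
    rw [Matrix.mul_apply]
    refine Finset.sum_congr rfl fun v _ => ?_
    rw [Matrix.mul_apply, Finset.sum_mul]
    refine Finset.sum_congr rfl fun u _ => ?_
    rw [hF u v, hFH v, Matrix.circulant_apply, smul_mul_assoc, smul_mul_assoc,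
      mul_smul_comm, smul_smul]
  rw [hentry]
  -- reduce to vanishing of the unscaled double sum
  have hS : ∑ v : Fin n, ∑ u : Fin n,
      ω ^ ((s : ℕ) * (u : ℕ)) * c (u - v) * σ ^ ((t : ℕ) * (v : ℕ)) = 0 := by
    rw [Finset.sum_comm]
    have hre : ∀ u : Fin n, ∑ v : Fin n,
        ω ^ ((s : ℕ) * (u : ℕ)) * c (u - v) * σ ^ ((t : ℕ) * (v : ℕ))
        = ∑ k : Fin n,
        ω ^ ((s : ℕ) * (u : ℕ)) * c k * σ ^ ((t : ℕ) * ((u - k : Fin n) : ℕ)) := by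
      intro u
      rw [← Equiv.sum_comp (Equiv.subLeft u)
        (fun v => ω ^ ((s : ℕ) * (u : ℕ)) * c (u - v) * σ ^ ((t : ℕ) * (v : ℕ)))]
      refine Finset.sum_congr rfl fun k _ => ?_
      simp only [Equiv.subLeft_apply, sub_sub_cancel]
    simp only [hre]
    rw [Finset.sum_comm]
    refine Finset.sum_eq_zero fun k _ => ?_
    -- fixed k : split c k into commuting and anticommuting parts
    set q : ℍ[ℝ] := c k with hqdef
    set A : ℍ[ℝ] := (2:ℝ)⁻¹ • (q - μ * q * μ) with hAdef
    set B : ℍ[ℝ] := (2:ℝ)⁻¹ • (q + μ * q * μ) with hBdef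
    have hAB : A + B = q := by
      rw [hAdef, hBdef, ← smul_add]
      have h : (q - μ * q * μ) + (q + μ * q * μ) = (2:ℝ) • q := by
        rw [two_smul]; abel
      rw [h, smul_smul]
      norm_num
    have hμA : μ * A = A * μ := by
      rw [hAdef, mul_smul_comm, smul_mul_assoc]
      congr 1
      have l : μ * (q - μ * q * μ) = μ * q - (μ * μ) * (q * μ) := by noncomm_ring
      have rr : (q - μ * q * μ) * μ = q * μ - (μ * q) * (μ * μ) := by noncomm_ring
      rw [l, rr, hμ2]
      noncomm_ring
    have hμB : μ * B = -(B * μ) := by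
      rw [hBdef, mul_smul_comm, smul_mul_assoc, ← smul_neg]
      congr 1
      have l : μ * (q + μ * q * μ) = μ * q + (μ * μ) * (q * μ) := by noncomm_ring
      have rr : -((q + μ * q * μ) * μ) = -(q * μ) - (μ * q) * (μ * μ) := by noncomm_ring
      rw [l, rr, hμ2]
      noncomm_ring
    -- cast of Fin subtraction
    have hfin : ∀ u : Fin n, (((u - k : Fin n) : ℕ) : ZMod n)
        = (((u : ℕ) : ZMod n)) - (((k : ℕ) : ZMod n)) := by
      intro u
      have h : ((u - k : Fin n) : ℕ) = (n - (k : ℕ) + (u : ℕ)) % n := by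
        rw [Fin.sub_def]
      rw [h, ZMod.natCast_mod]
      push_cast [Nat.cast_sub (le_of_lt k.isLt)]
      simp [ZMod.natCast_self]
      ring
    -- abbreviations in ZMod n
    set sz : ZMod n := ((s : ℕ) : ZMod n) with hszdef
    set tz : ZMod n := ((t : ℕ) : ZMod n) with htzdef
    set kz : ZMod n := ((k : ℕ) : ZMod n) with hkzdef
    have hd1 : sz - tz ≠ 0 := by
      intro h
      have h2 : sz = tz := sub_eq_zero.mp h
      have h3 : (s : ℕ) % n = (t : ℕ) % n := by
        have := congrArg ZMod.val h2
        rwa [hszdef, htzdef, ZMod.val_natCast, ZMod.val_natCast] at this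
      rw [Nat.mod_eq_of_lt s.isLt, Nat.mod_eq_of_lt t.isLt] at h3
      exact hst (Fin.ext h3)
    have hd2 : -(sz + tz) ≠ 0 := by
      intro h
      rw [neg_eq_zero] at h
      have h2 : (((s : ℕ) + (t : ℕ) : ℕ) : ZMod n) = 0 := by
        push_cast
        exact h
      rw [ZMod.natCast_eq_zero_iff] at h2
      exact hsum (Nat.mod_eq_zero_of_dvd h2)
    -- generic vanishing of the structured sums
    have hsum0 : ∀ (p : ℍ[ℝ]) (d c0 : ZMod n), d ≠ 0 →
        (∑ u : Fin n, p * (e (d * ((u : ℕ) : ZMod n)) * e c0)) = 0 := by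
      intro p d c0 hd
      have : ∑ u : Fin n, p * (e (d * ((u : ℕ) : ZMod n)) * e c0)
          = p * ((∑ u : Fin n, e (d * ((u : ℕ) : ZMod n))) * e c0) := by
        rw [Finset.sum_mul, Finset.mul_sum]
      rw [this, hkey d hd, zero_mul, mul_zero]
    -- rewrite each term
    have hA_term : ∀ u : Fin n,
        ω ^ ((s : ℕ) * (u : ℕ)) * A * σ ^ ((t : ℕ) * ((u - k : Fin n) : ℕ))
        = A * (e ((sz - tz) * ((u : ℕ) : ZMod n)) * e (tz * kz)) := by
      intro u
      rw [hbridge, hσdef, he_starpow, hcommA A hμA, mul_assoc, ← he_add, ← he_add]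
      congr 1
      push_cast [hfin u]
      congr 1
      simp only [hszdef, htzdef]
      ring
    have hB_term : ∀ u : Fin n,
        ω ^ ((s : ℕ) * (u : ℕ)) * B * σ ^ ((t : ℕ) * ((u - k : Fin n) : ℕ))
        = B * (e ((-(sz + tz)) * ((u : ℕ) : ZMod n)) * e (tz * kz)) := by
      intro u
      rw [hbridge, hσdef, he_starpow, hcommB B hμB, mul_assoc, ← he_add, ← he_add]
      congr 1
      push_cast [hfin u]
      congr 1
      simp only [hszdef, htzdef]
      ring
    calc ∑ u : Fin n, ω ^ ((s : ℕ) * (u : ℕ)) * c k * σ ^ ((t : ℕ) * ((u - k : Fin n) : ℕ))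
        = ∑ u : Fin n, (ω ^ ((s : ℕ) * (u : ℕ)) * A * σ ^ ((t : ℕ) * ((u - k : Fin n) : ℕ))
          + ω ^ ((s : ℕ) * (u : ℕ)) * B * σ ^ ((t : ℕ) * ((u - k : Fin n) : ℕ))) := by
          refine Finset.sum_congr rfl fun u _ => ?_
          rw [← hqdef, ← hAB]
          noncomm_ring
    _ = (∑ u : Fin n, A * (e ((sz - tz) * ((u : ℕ) : ZMod n)) * e (tz * kz)))
        + ∑ u : Fin n, B * (e ((-(sz + tz)) * ((u : ℕ) : ZMod n)) * e (tz * kz)) := by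
          rw [Finset.sum_add_distrib]
          congr 1
          · exact Finset.sum_congr rfl fun u _ => hA_term u
          · exact Finset.sum_congr rfl fun u _ => hB_term u
    _ = 0 := by
          rw [hsum0 A _ _ hd1, hsum0 B _ _ hd2, add_zero]
  calc ∑ v : Fin n, ∑ u : Fin n,
      (r * r) • (ω ^ ((s : ℕ) * (u : ℕ)) * c (u - v) * σ ^ ((t : ℕ) * (v : ℕ)))
      = (r * r) • ∑ v : Fin n, ∑ u : Fin n,
          ω ^ ((s : ℕ) * (u : ℕ)) * c (u - v) * σ ^ ((t : ℕ) * (v : ℕ)) := by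
        rw [Finset.smul_sum]
        refine Finset.sum_congr rfl fun v _ => ?_
        rw [Finset.smul_sum]
  _ = 0 := by rw [hS, smul_zero]
end
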